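/- There exists R* with 0 < R* ≤ (1/2)·√(3/(4π)) such that for every R with 0 < R < R*, the map T is a contraction on C_R^0 with contraction constant 3/4: for all (m̃₁,ρ̃₁), (m̃₂,ρ̃₂) ∈ C_R^0 one has ‖T[m̃₁,ρ̃₁] − T[m̃₂,ρ̃₂]‖ ≤ (3/4)·‖(m̃₁−m̃₂, ρ̃₁−ρ̃₂)‖. -/

import Mathlib

open Real Set MeasureTheory

noncomputable section

/-- `ρ₀(R) = (16π/3)R²`. -/
def rho0R (R : ℝ) : ℝ := 16 * π / 3 * R ^ 2

/-- Membership in the set `C_R^0`. -/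
def memC (R : ℝ) (m ρ : ℝ → ℝ) : Prop :=
  ContinuousOn m (Icc 0 R) ∧ ContinuousOn ρ (Icc 0 R) ∧
  ∀ r ∈ Icc (0:ℝ) R,
    0 ≤ m r ∧ m r ≤ 4 * π / 3 * rho0R R * r ^ 3 ∧ 0 ≤ ρ r ∧ ρ r ≤ rho0R R

/-- `M[ρ̃](r) = ∫₀^r 4πs²ρ̃(s) ds`. -/
def Mop (ρ : ℝ → ℝ) (r : ℝ) : ℝ := ∫ s in (0:ℝ)..r, 4 * π * s ^ 2 * ρ s

/-- `P[m̃,ρ̃](r)`. -/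
def Pop (R : ℝ) (m ρ : ℝ → ℝ) (r : ℝ) : ℝ :=
  ∫ s in r..R, (1 + 2 * ρ s) / (1 - 8 * π / 3 * s ^ 2 - 2 * m s / s) *
    (4 * π * s / 3) * (1 + 3 * ρ s + 3 * m s / (4 * π * s ^ 3))

/-- The norm `‖(m,ρ)‖ = (3/(4π))·sup_{(0,R]} |m/r³| + 2·sup_{[0,R]} |ρ|`. -/
def normCR (R : ℝ) (m ρ : ℝ → ℝ) : ℝ :=
  3 / (4 * π) * sSup ((fun r => |m r / r ^ 3|) '' Ioc 0 R) +
    2 * sSup ((fun r => |ρ r|) '' Icc 0 R)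

namespace StmtAux

/-- The integrand of `Pop`. -/
def pf (m ρ : ℝ → ℝ) (s : ℝ) : ℝ :=
  (1 + 2 * ρ s) / (1 - 8 * π / 3 * s ^ 2 - 2 * m s / s) *
    (4 * π * s / 3) * (1 + 3 * ρ s + 3 * m s / (4 * π * s ^ 3))

lemma Pop_eq (R : ℝ) (m ρ : ℝ → ℝ) (r : ℝ) : Pop R m ρ r = ∫ s in r..R, pf m ρ s := rfl

variable {R : ℝ} {m ρ : ℝ → ℝ}

lemma rho0_nonneg (R : ℝ) : 0 ≤ rho0R R := by
  unfold rho0R; positivity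

lemma rho0_le (hRs : R ≤ 1/100) (hR : 0 < R) : rho0R R ≤ 1/100 := by
  have h4 := Real.pi_le_four
  have h0 := Real.pi_pos
  have : R^2 ≤ (1/100)^2 := by nlinarith
  unfold rho0R; nlinarith

section est

variable (hR : 0 < R) (hRs : R ≤ 1/100) (h : memC R m ρ)
include hR hRs h

lemma den_bounds {s : ℝ} (hs : s ∈ Ioc (0:ℝ) R) :
    1/2 ≤ 1 - 8 * π / 3 * s ^ 2 - 2 * m s / s ∧
      1 - 8 * π / 3 * s ^ 2 - 2 * m s / s ≤ 1 := by
  obtain ⟨hs0, hsR⟩ := hs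
  have hsIcc : s ∈ Icc (0:ℝ) R := ⟨hs0.le, hsR⟩
  obtain ⟨hm0, hm1, hρ0, hρ1⟩ := h.2.2 s hsIcc
  have h4 := Real.pi_le_four
  have h0 := Real.pi_pos
  have hρ0R := rho0_le hRs hR
  have hs2 : s^2 ≤ (1/100)^2 := by nlinarith
  have hms : 2 * m s / s ≤ 8 * π / 3 * rho0R R * s ^ 2 := by
    rw [div_le_iff₀ hs0]
    nlinarith
  have hms0 : 0 ≤ 2 * m s / s := by positivity
  constructor
  · nlinarith [rho0_nonneg R, sq_nonneg s]
  · nlinarith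

lemma factor_bounds {s : ℝ} (hs : s ∈ Ioc (0:ℝ) R) :
    (1 ≤ 1 + 2 * ρ s ∧ 1 + 2 * ρ s ≤ 3) ∧
    (0 ≤ (1 + 2 * ρ s) / (1 - 8 * π / 3 * s ^ 2 - 2 * m s / s) ∧
     (1 + 2 * ρ s) / (1 - 8 * π / 3 * s ^ 2 - 2 * m s / s) ≤ 6) ∧
    (1 ≤ 1 + 3 * ρ s + 3 * m s / (4 * π * s ^ 3) ∧
     1 + 3 * ρ s + 3 * m s / (4 * π * s ^ 3) ≤ 5) := by
  obtain ⟨hs0, hsR⟩ := hs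
  have hsIcc : s ∈ Icc (0:ℝ) R := ⟨hs0.le, hsR⟩
  obtain ⟨hm0, hm1, hρ0, hρ1⟩ := h.2.2 s hsIcc
  have h0 := Real.pi_pos
  have hρ0R := rho0_le hRs hR
  obtain ⟨hd1, hd2⟩ := den_bounds hR hRs h ⟨hs0, hsR⟩
  have hd0 : (0:ℝ) < 1 - 8 * π / 3 * s ^ 2 - 2 * m s / s := by linarith
  have hs3 : (0:ℝ) < 4 * π * s ^ 3 := by positivity
  have hmc : 3 * m s / (4 * π * s ^ 3) ≤ rho0R R := by
    rw [div_le_iff₀ hs3]; nlinarith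
  have hmc0 : 0 ≤ 3 * m s / (4 * π * s ^ 3) := by positivity
  refine ⟨⟨by linarith, by linarith⟩, ⟨by positivity, ?_⟩, ⟨by linarith, by nlinarith⟩⟩
  · rw [div_le_iff₀ hd0]; nlinarith

lemma pf_abs_le {s : ℝ} (hs : s ∈ Ioc (0:ℝ) R) : |pf m ρ s| ≤ 2 := by
  obtain ⟨⟨ha1, ha2⟩, ⟨hA1, hA2⟩, hC1, hC2⟩ := factor_bounds hR hRs h hs
  have h0 := Real.pi_pos
  have h4 := Real.pi_le_four
  have hB : 0 ≤ 4 * π * s / 3 ∧ 4 * π * s / 3 ≤ 16 * R / 3 := by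
    constructor
    · have := hs.1.le; positivity
    · nlinarith [hs.2, hs.1.le]
  obtain ⟨hB0, hB1⟩ := hB
  have hf0 : (0:ℝ) ≤ pf m ρ s := by
    rw [pf]
    have h1 : 0 ≤ (1 + 2 * ρ s) / (1 - 8 * π / 3 * s ^ 2 - 2 * m s / s) * (4 * π * s / 3) :=
      mul_nonneg hA1 hB0
    exact mul_nonneg h1 (by linarith)
  rw [abs_of_nonneg hf0, pf]
  have h1 : (1 + 2 * ρ s) / (1 - 8 * π / 3 * s ^ 2 - 2 * m s / s) * (4 * π * s / 3) ≤
      6 * (16 * R / 3) := mul_le_mul hA2 hB1 hB0 (by norm_num)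
  have h2 : (1 + 2 * ρ s) / (1 - 8 * π / 3 * s ^ 2 - 2 * m s / s) * (4 * π * s / 3) *
      (1 + 3 * ρ s + 3 * m s / (4 * π * s ^ 3)) ≤ 6 * (16 * R / 3) * 5 :=
    mul_le_mul h1 hC2 (by linarith) (by nlinarith)
  nlinarith

lemma pf_contOn : ContinuousOn (pf m ρ) (Ioc 0 R) := by
  have hm : ContinuousOn m (Ioc 0 R) := h.1.mono Ioc_subset_Icc_self
  have hρ : ContinuousOn ρ (Ioc 0 R) := h.2.1.mono Ioc_subset_Icc_self
  have hid : ContinuousOn (fun s : ℝ => s) (Ioc 0 R) := continuousOn_id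
  have hden : ContinuousOn (fun s => 1 - 8 * π / 3 * s ^ 2 - 2 * m s / s) (Ioc 0 R) := by
    apply ContinuousOn.sub (by fun_prop)
    exact (continuousOn_const.mul hm).div hid (fun s hs => ne_of_gt hs.1)
  have hA : ContinuousOn
      (fun s => (1 + 2 * ρ s) / (1 - 8 * π / 3 * s ^ 2 - 2 * m s / s)) (Ioc 0 R) := by
    apply ContinuousOn.div (by fun_prop) hden
    intro s hs
    have := (den_bounds hR hRs h hs).1
    intro hc; rw [hc] at this; norm_num at this
  have hC : ContinuousOn (fun s => 1 + 3 * ρ s + 3 * m s / (4 * π * s ^ 3)) (Ioc 0 R) := by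
    apply ContinuousOn.add (by fun_prop)
    apply ContinuousOn.div (continuousOn_const.mul hm) (by fun_prop)
    intro s hs
    have h0 := Real.pi_pos
    have hs0 := hs.1
    positivity
  exact (hA.mul (by fun_prop)).mul hC

lemma pf_integrableOn : IntegrableOn (pf m ρ) (Ioc 0 R) := by
  refine ⟨((pf_contOn hR hRs h).aestronglyMeasurable measurableSet_Ioc), ?_⟩
  apply MeasureTheory.HasFiniteIntegral.restrict_of_bounded (C := 2)
    (measure_Ioc_lt_top)
  exact (ae_restrict_iff' measurableSet_Ioc).2 <| .of_forall fun s hs => pf_abs_le hR hRs h hs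

lemma pf_intervalIntegrable {r : ℝ} (hr : r ∈ Icc (0:ℝ) R) :
    IntervalIntegrable (pf m ρ) volume r R := by
  rw [intervalIntegrable_iff, uIoc_of_le hr.2]
  exact (pf_integrableOn hR hRs h).mono_set (Ioc_subset_Ioc hr.1 le_rfl)

end est

set_option maxHeartbeats 1000000 in
lemma pf_lip {R : ℝ} {m₁ ρ₁ m₂ ρ₂ : ℝ → ℝ} (hR : 0 < R) (hRs : R ≤ 1/100)
    (h₁ : memC R m₁ ρ₁) (h₂ : memC R m₂ ρ₂) {Dρ Dm : ℝ}
    (hDρ0 : 0 ≤ Dρ) (hDm0 : 0 ≤ Dm)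
    (hDρ : ∀ s ∈ Icc (0:ℝ) R, |ρ₁ s - ρ₂ s| ≤ Dρ)
    (hDm : ∀ s ∈ Ioc (0:ℝ) R, |m₁ s - m₂ s| ≤ Dm * s ^ 3)
    {s : ℝ} (hs : s ∈ Ioc (0:ℝ) R) :
    |pf m₁ ρ₁ s - pf m₂ ρ₂ s| ≤ 210 * R * (Dρ + Dm) := by
  obtain ⟨hs0, hsR⟩ := hs
  have hsIcc : s ∈ Icc (0:ℝ) R := ⟨hs0.le, hsR⟩
  have h0 := Real.pi_pos
  have h4 := Real.pi_le_four
  have h3 := Real.pi_gt_three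
  set D₁ := 1 - 8 * π / 3 * s ^ 2 - 2 * m₁ s / s with hD₁def
  set D₂ := 1 - 8 * π / 3 * s ^ 2 - 2 * m₂ s / s with hD₂def
  set A₁ := (1 + 2 * ρ₁ s) / D₁ with hA₁def
  set A₂ := (1 + 2 * ρ₂ s) / D₂ with hA₂def
  set B := 4 * π * s / 3 with hBdef
  set C₁ := 1 + 3 * ρ₁ s + 3 * m₁ s / (4 * π * s ^ 3) with hC₁def
  set C₂ := 1 + 3 * ρ₂ s + 3 * m₂ s / (4 * π * s ^ 3) with hC₂def
  obtain ⟨hd₁l, hd₁u⟩ := den_bounds hR hRs h₁ ⟨hs0, hsR⟩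
  obtain ⟨hd₂l, hd₂u⟩ := den_bounds hR hRs h₂ ⟨hs0, hsR⟩
  obtain ⟨⟨ha₁1, ha₁2⟩, ⟨hA₁0, hA₁6⟩, hC₁1, hC₁5⟩ := factor_bounds hR hRs h₁ ⟨hs0, hsR⟩
  obtain ⟨⟨ha₂1, ha₂2⟩, ⟨hA₂0, hA₂6⟩, hC₂1, hC₂5⟩ := factor_bounds hR hRs h₂ ⟨hs0, hsR⟩
  rw [← hD₁def] at hd₁l hd₁u hA₁0 hA₁6
  rw [← hD₂def] at hd₂l hd₂u hA₂0 hA₂6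
  rw [← hA₁def] at hA₁0 hA₁6
  rw [← hA₂def] at hA₂0 hA₂6
  rw [← hC₁def] at hC₁1 hC₁5
  rw [← hC₂def] at hC₂1 hC₂5
  have hpf₁ : pf m₁ ρ₁ s = A₁ * B * C₁ := rfl
  have hpf₂ : pf m₂ ρ₂ s = A₂ * B * C₂ := rfl
  clear_value D₁ D₂ A₁ A₂ B C₁ C₂
  have hD₁0 : D₁ ≠ 0 := by intro hc; rw [hc] at hd₁l; norm_num at hd₁l
  have hD₂0 : D₂ ≠ 0 := by intro hc; rw [hc] at hd₂l; norm_num at hd₂l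
  have hBnn : 0 ≤ B := by rw [hBdef]; positivity
  have hBle : B ≤ 16 * R / 3 := by rw [hBdef]; nlinarith
  have hΔρ := hDρ s hsIcc
  have hΔm := hDm s ⟨hs0, hsR⟩
  have hs2 : s ^ 2 ≤ (1/100) ^ 2 := by nlinarith
  -- bound on A₁ - A₂
  have hAsub : A₁ - A₂ = (2 * (ρ₁ s - ρ₂ s)) / D₁ + (1 + 2 * ρ₂ s) * (D₂ - D₁) / (D₁ * D₂) := by
    rw [hA₁def, hA₂def]; field_simp; ring
  have hDsub : D₂ - D₁ = 2 * (m₁ s - m₂ s) / s := by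
    rw [hD₁def, hD₂def]; field_simp; ring
  have ht1 : |(2 * (ρ₁ s - ρ₂ s)) / D₁| ≤ 4 * Dρ := by
    rw [abs_div, abs_of_pos (by linarith : (0:ℝ) < D₁), div_le_iff₀ (by linarith)]
    have : |2 * (ρ₁ s - ρ₂ s)| = 2 * |ρ₁ s - ρ₂ s| := by
      rw [abs_mul]; norm_num
    rw [this]
    have hh := mul_le_mul_of_nonneg_left hd₁l hDρ0
    linarith
  have hDsubabs : |D₂ - D₁| ≤ 2 * Dm * s ^ 2 := by
    rw [hDsub, abs_div, abs_of_pos hs0]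
    rw [div_le_iff₀ hs0]
    have : |2 * (m₁ s - m₂ s)| = 2 * |m₁ s - m₂ s| := by rw [abs_mul]; norm_num
    rw [this]
    nlinarith [pow_pos hs0 3]
  have hDD : (1:ℝ)/2 * (1/2) ≤ D₁ * D₂ := mul_le_mul hd₁l hd₂l (by norm_num) (by linarith)
  have ht2 : |(1 + 2 * ρ₂ s) * (D₂ - D₁) / (D₁ * D₂)| ≤ Dm / 400 := by
    rw [abs_div, abs_mul, abs_of_pos (by positivity : (0:ℝ) < 1 + 2 * ρ₂ s),
      abs_of_pos (by linarith : (0:ℝ) < D₁ * D₂), div_le_iff₀ (by linarith)]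
    have h1 : |D₂ - D₁| ≤ 2 * Dm * (1/100)^2 := by nlinarith [mul_le_mul_of_nonneg_left hs2 hDm0]
    have h2 : (1 + 2 * ρ₂ s) * |D₂ - D₁| ≤ 3 * (2 * Dm * (1/100)^2) :=
      mul_le_mul ha₂2 h1 (abs_nonneg _) (by norm_num)
    have h3 : Dm / 400 * (1/2 * (1/2)) ≤ Dm / 400 * (D₁ * D₂) :=
      mul_le_mul_of_nonneg_left hDD (by positivity)
    linarith
  have hΔA : |A₁ - A₂| ≤ 4 * Dρ + Dm / 400 := by
    rw [hAsub]
    exact (abs_add_le _ _).trans (by linarith)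
  -- bound on C₁ - C₂
  have hCsub : C₁ - C₂ = 3 * (ρ₁ s - ρ₂ s) + 3 * (m₁ s - m₂ s) / (4 * π * s ^ 3) := by
    rw [hC₁def, hC₂def]; field_simp; ring
  have ht3 : |3 * (m₁ s - m₂ s) / (4 * π * s ^ 3)| ≤ Dm / 4 := by
    rw [abs_div, abs_of_pos (by positivity : (0:ℝ) < 4 * π * s ^ 3),
      div_le_iff₀ (by positivity)]
    have : |3 * (m₁ s - m₂ s)| = 3 * |m₁ s - m₂ s| := by rw [abs_mul]; norm_num
    rw [this]
    nlinarith [mul_nonneg hDm0 (pow_pos hs0 3).le]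
  have hΔC : |C₁ - C₂| ≤ 3 * Dρ + Dm / 4 := by
    rw [hCsub]
    refine (abs_add_le _ _).trans ?_
    have : |3 * (ρ₁ s - ρ₂ s)| = 3 * |ρ₁ s - ρ₂ s| := by rw [abs_mul]; norm_num
    rw [this]; linarith
  -- assemble
  have hsplit : pf m₁ ρ₁ s - pf m₂ ρ₂ s = (A₁ - A₂) * B * C₁ + A₂ * B * (C₁ - C₂) := by
    rw [hpf₁, hpf₂]; ring
  have he1 : |(A₁ - A₂) * B * C₁| ≤ (4 * Dρ + Dm / 400) * (16 * R / 3) * 5 := by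
    rw [abs_mul, abs_mul, abs_of_nonneg hBnn, abs_of_nonneg (by linarith : (0:ℝ) ≤ C₁)]
    have h1 : |A₁ - A₂| * B ≤ (4 * Dρ + Dm / 400) * (16 * R / 3) :=
      mul_le_mul hΔA hBle hBnn (by positivity)
    exact mul_le_mul h1 hC₁5 (by linarith) (by positivity)
  have he2 : |A₂ * B * (C₁ - C₂)| ≤ 6 * (16 * R / 3) * (3 * Dρ + Dm / 4) := by
    rw [abs_mul, abs_mul, abs_of_nonneg hA₂0, abs_of_nonneg hBnn]
    have h1 : A₂ * B ≤ 6 * (16 * R / 3) := mul_le_mul hA₂6 hBle hBnn (by norm_num)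
    exact mul_le_mul h1 hΔC (abs_nonneg _) (by positivity)
  rw [hsplit]
  refine (abs_add_le _ _).trans ?_
  clear hsplit hpf₁ hpf₂ hΔA hΔC hCsub hAsub hDsub hDsubabs ht1 ht2 ht3 hΔρ hΔm
  clear h₁ h₂ hDρ hDm hsIcc hd₁l hd₁u hd₂l hd₂u ha₁1 ha₁2 ha₂1 ha₂2 hA₁0 hA₁6 hA₂0 hA₂6
  clear hC₁1 hC₂1 hC₂5 hD₁0 hD₂0 hDD hD₁def hD₂def hA₁def hA₂def hBdef hC₁def hC₂def
  have harith : (4 * Dρ + Dm / 400) * (16 * R / 3) * 5 + 6 * (16 * R / 3) * (3 * Dρ + Dm / 4)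
      ≤ 210 * R * (Dρ + Dm) := by
    nlinarith [mul_nonneg hR.le hDρ0, mul_nonneg hR.le hDm0]
  linarith

lemma Mop_diff_bound {R : ℝ} {ρ₁ ρ₂ : ℝ → ℝ} (hR : 0 < R)
    (h₁c : ContinuousOn ρ₁ (Icc 0 R)) (h₂c : ContinuousOn ρ₂ (Icc 0 R)) {Dρ : ℝ}
    (hDρ0 : 0 ≤ Dρ) (hDρ : ∀ s ∈ Icc (0:ℝ) R, |ρ₁ s - ρ₂ s| ≤ Dρ)
    {r : ℝ} (hr : r ∈ Ioc (0:ℝ) R) :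
    |(Mop ρ₁ r - Mop ρ₂ r) / r ^ 3| ≤ 4 * π / 3 * Dρ := by
  obtain ⟨hr0, hrR⟩ := hr
  have h0 := Real.pi_pos
  have hsub : Icc (0:ℝ) r ⊆ Icc 0 R := Icc_subset_Icc le_rfl hrR
  have hi₁ : IntervalIntegrable (fun s => 4 * π * s ^ 2 * ρ₁ s) volume 0 r := by
    apply ContinuousOn.intervalIntegrable
    rw [uIcc_of_le hr0.le]
    exact (by fun_prop : ContinuousOn (fun s : ℝ => 4 * π * s ^ 2) (Icc 0 r)).mul (h₁c.mono hsub)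
  have hi₂ : IntervalIntegrable (fun s => 4 * π * s ^ 2 * ρ₂ s) volume 0 r := by
    apply ContinuousOn.intervalIntegrable
    rw [uIcc_of_le hr0.le]
    exact (by fun_prop : ContinuousOn (fun s : ℝ => 4 * π * s ^ 2) (Icc 0 r)).mul (h₂c.mono hsub)
  have hMsub : Mop ρ₁ r - Mop ρ₂ r
      = ∫ s in (0:ℝ)..r, (4 * π * s ^ 2 * ρ₁ s - 4 * π * s ^ 2 * ρ₂ s) :=
    (intervalIntegral.integral_sub hi₁ hi₂).symm
  have hgint : IntervalIntegrable (fun s => 4 * π * Dρ * s ^ 2) volume 0 r :=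
    (Continuous.intervalIntegrable (by fun_prop) 0 r)
  have hle : ‖∫ s in (0:ℝ)..r, (4 * π * s ^ 2 * ρ₁ s - 4 * π * s ^ 2 * ρ₂ s)‖
      ≤ |∫ s in (0:ℝ)..r, 4 * π * Dρ * s ^ 2| := by
    apply intervalIntegral.norm_integral_le_abs_of_norm_le _ hgint
    rw [uIoc_of_le hr0.le]
    refine (MeasureTheory.ae_restrict_iff' measurableSet_Ioc).2 (.of_forall fun s hs => ?_)
    have hsIcc : s ∈ Icc (0:ℝ) R := ⟨hs.1.le, hs.2.trans hrR⟩
    have h1 : 4 * π * s ^ 2 * ρ₁ s - 4 * π * s ^ 2 * ρ₂ s = 4 * π * s ^ 2 * (ρ₁ s - ρ₂ s) := by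
      ring
    rw [Real.norm_eq_abs, h1, abs_mul, abs_of_nonneg (by positivity : (0:ℝ) ≤ 4 * π * s ^ 2)]
    have := hDρ s hsIcc
    have hs2 : (0:ℝ) ≤ 4 * π * s ^ 2 := by positivity
    nlinarith
  have hval : ∫ s in (0:ℝ)..r, 4 * π * Dρ * s ^ 2 = 4 * π * Dρ * (r ^ 3 / 3) := by
    rw [intervalIntegral.integral_const_mul]
    rw [integral_pow]
    ring
  rw [abs_div, abs_of_pos (by positivity : (0:ℝ) < r ^ 3), div_le_iff₀ (by positivity)]
  have h2 : |Mop ρ₁ r - Mop ρ₂ r| ≤ 4 * π * Dρ * (r ^ 3 / 3) := by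
    rw [hMsub]
    calc _ ≤ |∫ s in (0:ℝ)..r, 4 * π * Dρ * s ^ 2| := hle
    _ = _ := by rw [hval, abs_of_nonneg (by positivity)]
  nlinarith

lemma Pop_diff_bound {R : ℝ} {m₁ ρ₁ m₂ ρ₂ : ℝ → ℝ} (hR : 0 < R) (hRs : R ≤ 1/100)
    (h₁ : memC R m₁ ρ₁) (h₂ : memC R m₂ ρ₂) {Dρ Dm : ℝ}
    (hDρ0 : 0 ≤ Dρ) (hDm0 : 0 ≤ Dm)
    (hDρ : ∀ s ∈ Icc (0:ℝ) R, |ρ₁ s - ρ₂ s| ≤ Dρ)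
    (hDm : ∀ s ∈ Ioc (0:ℝ) R, |m₁ s - m₂ s| ≤ Dm * s ^ 3)
    {r : ℝ} (hr : r ∈ Icc (0:ℝ) R) :
    |Pop R m₁ ρ₁ r - Pop R m₂ ρ₂ r| ≤ 210 * R * (Dρ + Dm) * R := by
  rw [Pop_eq, Pop_eq,
    ← intervalIntegral.integral_sub (pf_intervalIntegrable hR hRs h₁ hr)
      (pf_intervalIntegrable hR hRs h₂ hr)]
  have h1 : |∫ s in r..R, (pf m₁ ρ₁ s - pf m₂ ρ₂ s)| ≤ 210 * R * (Dρ + Dm) * |R - r| := by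
    rw [← Real.norm_eq_abs]
    apply intervalIntegral.norm_integral_le_of_norm_le_const
    intro s hs
    rw [Real.norm_eq_abs]
    rw [uIoc_of_le hr.2] at hs
    exact pf_lip hR hRs h₁ h₂ hDρ0 hDm0 hDρ hDm (Ioc_subset_Ioc hr.1 le_rfl hs)
  have h2 : |R - r| ≤ R := by
    rw [abs_of_nonneg (by linarith [hr.2])]
    linarith [hr.1]
  calc _ ≤ 210 * R * (Dρ + Dm) * |R - r| := h1
  _ ≤ 210 * R * (Dρ + Dm) * R := by
      apply mul_le_mul_of_nonneg_left h2
      positivity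

end StmtAux

theorem stmt2 :
    ∃ Rstar : ℝ, 0 < Rstar ∧ Rstar ≤ 1 / 2 * Real.sqrt (3 / (4 * π)) ∧
    ∀ R : ℝ, 0 < R → R < Rstar →
      ∀ m₁ ρ₁ m₂ ρ₂ : ℝ → ℝ, memC R m₁ ρ₁ → memC R m₂ ρ₂ →
        normCR R (fun r => Mop ρ₁ r - Mop ρ₂ r)
            (fun r => Pop R m₁ ρ₁ r - Pop R m₂ ρ₂ r) ≤
          3 / 4 * normCR R (fun r => m₁ r - m₂ r) (fun r => ρ₁ r - ρ₂ r) := by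
  have h0 := Real.pi_pos
  have h4 := Real.pi_le_four
  refine ⟨1/100, by norm_num, ?_, ?_⟩
  · have h1 : (1/50 : ℝ) ≤ Real.sqrt (3 / (4 * π)) := by
      rw [show (1/50:ℝ) = Real.sqrt ((1/50)^2) from (Real.sqrt_sq (by norm_num)).symm]
      apply Real.sqrt_le_sqrt
      rw [le_div_iff₀ (by positivity)]
      nlinarith
    linarith
  intro R hR hRlt m₁ ρ₁ m₂ ρ₂ h₁ h₂
  have hRs : R ≤ 1/100 := le_of_lt hRlt
  have hρ0R := StmtAux.rho0_le hRs hR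
  have hρ0nn := StmtAux.rho0_nonneg R
  simp only [normCR]
  set Dm := sSup ((fun r => |(m₁ r - m₂ r) / r ^ 3|) '' Ioc 0 R) with hDmdef
  set Dρ := sSup ((fun r => |ρ₁ r - ρ₂ r|) '' Icc 0 R) with hDρdef
  -- bounds for RHS sups
  have hbddρ : BddAbove ((fun r => |ρ₁ r - ρ₂ r|) '' Icc 0 R) := by
    refine ⟨2 * rho0R R, ?_⟩
    rintro x ⟨s, hs, rfl⟩
    dsimp only
    obtain ⟨_, _, hρ₁0, hρ₁1⟩ := h₁.2.2 s hs
    obtain ⟨_, _, hρ₂0, hρ₂1⟩ := h₂.2.2 s hs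
    rw [abs_sub_le_iff]
    constructor <;> linarith
  have hbddm : BddAbove ((fun r => |(m₁ r - m₂ r) / r ^ 3|) '' Ioc 0 R) := by
    refine ⟨8 * π / 3 * rho0R R, ?_⟩
    rintro x ⟨s, hs, rfl⟩
    dsimp only
    obtain ⟨hm₁0, hm₁1, _, _⟩ := h₁.2.2 s ⟨hs.1.le, hs.2⟩
    obtain ⟨hm₂0, hm₂1, _, _⟩ := h₂.2.2 s ⟨hs.1.le, hs.2⟩
    have hs3 : (0:ℝ) < s ^ 3 := pow_pos hs.1 3
    rw [abs_div, abs_of_pos hs3, div_le_iff₀ hs3, abs_sub_le_iff]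
    constructor <;> nlinarith
  have hDρpt : ∀ s ∈ Icc (0:ℝ) R, |ρ₁ s - ρ₂ s| ≤ Dρ := fun s hs =>
    le_csSup hbddρ ⟨s, hs, rfl⟩
  have hDρ0 : 0 ≤ Dρ := (abs_nonneg _).trans (hDρpt 0 ⟨le_rfl, hR.le⟩)
  have hDmpt' : ∀ s ∈ Ioc (0:ℝ) R, |(m₁ s - m₂ s) / s ^ 3| ≤ Dm := fun s hs =>
    le_csSup hbddm ⟨s, hs, rfl⟩
  have hDm0 : 0 ≤ Dm :=
    (abs_nonneg _).trans (hDmpt' R ⟨hR, le_rfl⟩)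
  have hDmpt : ∀ s ∈ Ioc (0:ℝ) R, |m₁ s - m₂ s| ≤ Dm * s ^ 3 := by
    intro s hs
    have hs3 : (0:ℝ) < s ^ 3 := pow_pos hs.1 3
    have := hDmpt' s hs
    rw [abs_div, abs_of_pos hs3, div_le_iff₀ hs3] at this
    linarith
  -- bounds for LHS sups
  have hS1 : sSup ((fun r => |(Mop ρ₁ r - Mop ρ₂ r) / r ^ 3|) '' Ioc 0 R)
      ≤ 4 * π / 3 * Dρ := by
    apply Real.sSup_le ?_ (by positivity)
    rintro x ⟨r, hr, rfl⟩
    exact StmtAux.Mop_diff_bound hR h₁.2.1 h₂.2.1 hDρ0 hDρpt hr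
  have hS2 : sSup ((fun r => |Pop R m₁ ρ₁ r - Pop R m₂ ρ₂ r|) '' Icc 0 R)
      ≤ 210 * R * (Dρ + Dm) * R := by
    apply Real.sSup_le ?_ (by positivity)
    rintro x ⟨r, hr, rfl⟩
    exact StmtAux.Pop_diff_bound hR hRs h₁ h₂ hDρ0 hDm0 hDρpt hDmpt hr
  -- combine
  have e1 : 3 / (4 * π) * sSup ((fun r => |(Mop ρ₁ r - Mop ρ₂ r) / r ^ 3|) '' Ioc 0 R)
      ≤ Dρ := by
    have := mul_le_mul_of_nonneg_left hS1 (by positivity : (0:ℝ) ≤ 3 / (4 * π))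
    calc _ ≤ 3 / (4 * π) * (4 * π / 3 * Dρ) := this
    _ = Dρ := by
        rw [hDρdef]
        field_simp
  have e2 : 2 * sSup ((fun r => |Pop R m₁ ρ₁ r - Pop R m₂ ρ₂ r|) '' Icc 0 R)
      ≤ 420 * ((Dρ + Dm) * R ^ 2) := by
    have := hS2; nlinarith
  have hR2 : R ^ 2 ≤ (1/100) ^ 2 := by nlinarith
  have e3 : 420 * ((Dρ + Dm) * R ^ 2) ≤ 420 * ((Dρ + Dm) * (1/100)^2) := by
    have := mul_le_mul_of_nonneg_left hR2 (add_nonneg hDρ0 hDm0)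
    nlinarith
  have h316 : (3:ℝ)/16 ≤ 3 / (4 * π) := by
    rw [div_le_div_iff₀ (by norm_num) (by positivity)]
    nlinarith
  have e4 : 3/16 * Dm ≤ 3 / (4 * π) * Dm := mul_le_mul_of_nonneg_right h316 hDm0
  linarith

end
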